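/- Let {r_k}_{k≥0} be a nonincreasing sequence of nonnegative reals and M > 0 a constant such that r_{k+1}^{3/2} ≤ M²(r_k − r_{k+1}) for all k ≥ 0. Then for all k ≥ 1, r_k ≤ 1/((k/(M²(2 + (3/(2M²))√r₀)) + 1/√r₀)², i.e., 1/√r_k − 1/√r_{k-1} ≥ 1/(M²(2 + (3/(2M²))√r₀)) whenever r_k > 0. -/

import Mathlib

/-- If `{r_k}` is nonincreasing, nonnegative, and satisfies
`r_{k+1}^{3/2} ≤ M²(r_k − r_{k+1})`, then the per-step estimate
`1/√r_k − 1/√r_{k−1} ≥ 1/(M²(2 + (3/(2M²))√r₀))` holds whenever `r_k > 0`, and hence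
`r_k ≤ 1/((k/(M²(2 + (3/(2M²))√r₀)) + 1/√r₀)²` for all `k ≥ 1`. -/
theorem sublinear_rate_recursion
    (r : ℕ → ℝ) (M : ℝ) (hM : 0 < M)
    (hnn : ∀ k, 0 ≤ r k)
    (hdec : ∀ k, r (k + 1) ≤ r k)
    (hrec : ∀ k, r (k + 1) ^ ((3 : ℝ) / 2) ≤ M ^ 2 * (r k - r (k + 1))) :
    (∀ k : ℕ, 1 ≤ k → 0 < r k →
      1 / (M ^ 2 * (2 + (3 / (2 * M ^ 2)) * Real.sqrt (r 0)))
        ≤ 1 / Real.sqrt (r k) - 1 / Real.sqrt (r (k - 1))) ∧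
    (∀ k : ℕ, 1 ≤ k →
      r k ≤ 1 / ((k / (M ^ 2 * (2 + (3 / (2 * M ^ 2)) * Real.sqrt (r 0)))
        + 1 / Real.sqrt (r 0)) ^ 2)) := by
  have hM2 : (0:ℝ) < M ^ 2 := by positivity
  set S := Real.sqrt (r 0) with hS
  have hSnn : 0 ≤ S := Real.sqrt_nonneg _
  set c := M ^ 2 * (2 + (3 / (2 * M ^ 2)) * S) with hc
  have hceq : c = 2 * M ^ 2 + (3 / 2) * S := by
    rw [hc]; field_simp
  have hcpos : 0 < c := by rw [hceq]; positivity
  -- monotonicity down to r 0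
  have hmono : ∀ k, r k ≤ r 0 := by
    intro k
    induction k with
    | zero => exact le_refl (r 0)
    | succ n ih => exact (hdec n).trans ih
  -- main step lemma
  have step : ∀ k : ℕ, 0 < r (k + 1) →
      1 / c ≤ 1 / Real.sqrt (r (k + 1)) - 1 / Real.sqrt (r k) := by
    intro k hpos
    set t := Real.sqrt (r (k + 1)) with ht
    set s := Real.sqrt (r k) with hs
    have htpos : 0 < t := Real.sqrt_pos.mpr hpos
    have hrk : 0 < r k := lt_of_lt_of_le hpos (hdec k)
    have hspos : 0 < s := Real.sqrt_pos.mpr hrk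
    have hts : t ≤ s := Real.sqrt_le_sqrt (hdec k)
    have hsS : s ≤ S := Real.sqrt_le_sqrt (hmono k)
    have ht2 : t ^ 2 = r (k + 1) := Real.sq_sqrt (hnn _)
    have hs2 : s ^ 2 = r k := Real.sq_sqrt (hnn _)
    have hcube : t ^ 3 ≤ M ^ 2 * (s ^ 2 - t ^ 2) := by
      have : r (k + 1) ^ ((3 : ℝ) / 2) = t ^ 3 := by
        rw [ht, Real.sqrt_eq_rpow, ← Real.rpow_natCast (r (k+1) ^ ((1:ℝ)/2)) 3,
          ← Real.rpow_mul (hnn _)]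
        norm_num
      rw [ht2, hs2]
      calc t ^ 3 = r (k+1) ^ ((3:ℝ)/2) := this.symm
        _ ≤ M ^ 2 * (r k - r (k+1)) := hrec k
    -- key algebraic inequality
    have hstsq : t ^ 2 ≤ s ^ 2 := by nlinarith
    have hSs : (3/2) * s * (s^2 - t^2) ≤ (3/2) * S * (s^2 - t^2) := by
      nlinarith [mul_nonneg (sub_nonneg.mpr hsS) (sub_nonneg.mpr hstsq)]
    have hQ : 0 ≤ (s - t) * ((3/2) * s^2 + (1/2) * s * t - 2 * t^2) := by
      apply mul_nonneg (sub_nonneg.mpr hts)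
      nlinarith [mul_le_mul_of_nonneg_left hts htpos.le, mul_le_mul hts hts htpos.le hspos.le]
    have hmul : (s + t) * (s * t) ≤ (s + t) * (c * (s - t)) := by
      rw [hceq]; nlinarith [hcube, hSs, hQ]
    have key : s * t ≤ c * (s - t) :=
      le_of_mul_le_mul_left hmul (by positivity)
    have hst : 0 < s * t := mul_pos hspos htpos
    have h1 : 1 / c ≤ (s - t) / (s * t) := by
      rw [div_le_div_iff₀ hcpos hst]
      linarith
    calc 1 / c ≤ (s - t) / (s * t) := h1
      _ = 1 / t - 1 / s := by
          rw [div_sub_div 1 1 htpos.ne' hspos.ne', one_mul, mul_one, mul_comm]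
  constructor
  · intro k hk hpos
    obtain ⟨j, rfl⟩ : ∃ j, k = j + 1 := ⟨k - 1, (Nat.succ_pred_eq_of_pos hk).symm⟩
    simpa using step j hpos
  · -- part 2
    have claim : ∀ k : ℕ, 0 < r k → (k : ℝ) / c + 1 / S ≤ 1 / Real.sqrt (r k) := by
      intro k
      induction k with
      | zero => intro h; simp [hS]
      | succ n ih =>
        intro h
        have hrn : 0 < r n := lt_of_lt_of_le h (hdec n)
        have h1 := ih hrn
        have h2 := step n h
        push_cast
        linarith [h1, h2, (by ring : ((n:ℝ) + 1)/c = (n:ℝ)/c + 1/c)]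
    intro k hk
    have hDpos : 0 < (k : ℝ) / c + 1 / S := by
      have : 0 < (k : ℝ) / c := by
        apply div_pos _ hcpos
        exact_mod_cast hk
      have h2 : 0 ≤ 1 / S := by positivity
      linarith
    rcases eq_or_lt_of_le (hnn k) with h0 | hpos
    · rw [← h0]; positivity
    · have h1 := claim k hpos
      have hsq : Real.sqrt (r k) ≤ 1 / ((k : ℝ) / c + 1 / S) := by
        rw [le_div_iff₀ hDpos]
        have hsp : 0 < Real.sqrt (r k) := Real.sqrt_pos.mpr hpos
        calc Real.sqrt (r k) * ((k:ℝ)/c + 1/S)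
            ≤ Real.sqrt (r k) * (1 / Real.sqrt (r k)) :=
              mul_le_mul_of_nonneg_left h1 (le_of_lt hsp)
          _ = 1 := by field_simp
      calc r k = Real.sqrt (r k) ^ 2 := (Real.sq_sqrt (hnn k)).symm
        _ ≤ (1 / ((k : ℝ) / c + 1 / S)) ^ 2 := by
            apply pow_le_pow_left₀ (Real.sqrt_nonneg _) hsq
        _ = 1 / (((k : ℝ) / c + 1 / S)) ^ 2 := by rw [div_pow, one_pow]
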